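/- Let n, d, r be positive integers with n ≤ r ≤ C(n+1,2) (the binomial coefficient (n+1 choose 2)). Let I ⊆ V be a homogeneous ideal with dim_ℂ (V/I)_a = h_{r,Y}(a) for all a ≥ 0. Then dim_ℂ (S/Υ(I))_u = h_{r,X}(u) for all u ∈ ℤ^d_{≥0}. -/

import Mathlib

/-!
Common setup, following the paper "On the abundance of minimal border rank symmetric
tensors verifying Comon's conjecture".

* `S = ℂ[α_{i,j} : 1 ≤ i ≤ d, 1 ≤ j ≤ n]` is modeled as `MvPolynomial (Fin d × Fin n) ℂ`,
  with the `ℤ^d`-grading in which `deg α_{i,j} = e_i`; `Scomp n d u` is the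
  multidegree-`u` component (`u : Fin d → ℕ`).
* `V = ℂ[β_1,…,β_n]` is modeled as `MvPolynomial (Fin n) ℂ` with its standard grading;
  `Vcomp n N` is the degree-`N` component.
* The graded duals `T` and `P` are modeled by the same polynomial rings, with `S`
  (resp. `V`) acting by differentiation (`apolar`); `ann F` is the apolar
  (annihilator) ideal of `F`.
* A tensor `F ∈ (ℂ^n)^{⊗d}` is an element of the multidegree-`(1,…,1)` component
  `Scomp n d (fun _ => 1)` (a multilinear form in the `x_{i,j}`).
-/

open MvPolynomial Submodule Module

noncomputable section

namespace BorderComon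

/-- the multidegree-`u` graded component of `S`. -/
def Scomp (n d : ℕ) (u : Fin d → ℕ) : Submodule ℂ (MvPolynomial (Fin d × Fin n) ℂ) :=
  weightedHomogeneousSubmodule ℂ (fun p : Fin d × Fin n => Pi.single p.1 1) u

/-- the degree-`N` graded component of `V`. -/
def Vcomp (n : ℕ) (N : ℕ) : Submodule ℂ (MvPolynomial (Fin n) ℂ) :=
  homogeneousSubmodule (Fin n) ℂ N

/-- the diagonal ring map `π : S → V`, `α_{i,j} ↦ β_j`. -/
def piAlg (n d : ℕ) : MvPolynomial (Fin d × Fin n) ℂ →ₐ[ℂ] MvPolynomial (Fin n) ℂ :=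
  aeval (fun p : Fin d × Fin n => X p.2)

/-- `π` as a `ℂ`-linear map. -/
def piL (n d : ℕ) : MvPolynomial (Fin d × Fin n) ℂ →ₗ[ℂ] MvPolynomial (Fin n) ℂ :=
  (piAlg n d).toLinearMap

/-- the ring map `ρ : S → V`, `α_{1,j} ↦ β_j` and `α_{i,j} ↦ 0` for `i ≥ 2`
(rows are `0`-indexed, so the first row is row `0`). -/
def rho (n d : ℕ) : MvPolynomial (Fin d × Fin n) ℂ →ₐ[ℂ] MvPolynomial (Fin n) ℂ :=
  aeval (fun p : Fin d × Fin n => if (p.1 : ℕ) = 0 then X p.2 else 0)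

/-- the result of differentiating `F` by the monomial `X^a`:
`∂^a X^b = (∏_i b_i!/(b_i-a_i)!) X^{b-a}` (and `= 0` unless `a ≤ b`, which is
automatic since the descending factorial vanishes there). -/
def diffMon {σ : Type*} (a : σ →₀ ℕ) (F : MvPolynomial σ ℂ) : MvPolynomial σ ℂ :=
  ∑ b ∈ F.support, (F.coeff b * ∏ i ∈ a.support, ((b i).descFactorial (a i) : ℂ)) •
    monomial (b - a) (1 : ℂ)

/-- the apolarity action: `apolar F ψ = ψ ∘ F` is the result of letting `ψ` act on `F`
by differentiation, linearly in `ψ`. -/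
def apolar {σ : Type*} (F : MvPolynomial σ ℂ) : MvPolynomial σ ℂ →ₗ[ℂ] MvPolynomial σ ℂ :=
  Finsupp.lsum ℂ (fun a : σ →₀ ℕ => LinearMap.toSpanSingleton ℂ _ (diffMon a F)) ∘ₗ
    (AddMonoidAlgebra.coeffLinearEquiv ℂ).toLinearMap

/-- the apolar (annihilator) ideal `Ann(F) = {ψ : ψ ∘ F = 0}`, as a subspace. -/
def ann {σ : Type*} (F : MvPolynomial σ ℂ) : Submodule ℂ (MvPolynomial σ ℂ) :=
  LinearMap.ker (apolar F)

/-- the ideal `I_R ⊆ S` generated by the `2×2` minors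
`α_{i,j} α_{k,ℓ} − α_{i,ℓ} α_{k,j}`, `i < k`, `j < ℓ`. -/
def IR (n d : ℕ) : Ideal (MvPolynomial (Fin d × Fin n) ℂ) :=
  Ideal.span {q | ∃ i k : Fin d, ∃ j l : Fin n, i < k ∧ j < l ∧
    q = X (i, j) * X (k, l) - X (i, l) * X (k, j)}

/-- `J ⊆ S` is a (multigraded) homogeneous ideal: it is the sum of its
multigraded components. -/
def IsHomogS (n d : ℕ) (J : Ideal (MvPolynomial (Fin d × Fin n) ℂ)) : Prop :=
  Submodule.restrictScalars ℂ J = ⨆ u : Fin d → ℕ, (Submodule.restrictScalars ℂ J ⊓ Scomp n d u)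

/-- `I ⊆ V` is a homogeneous ideal: it is the sum of its graded components. -/
def IsHomogV (n : ℕ) (I : Ideal (MvPolynomial (Fin n) ℂ)) : Prop :=
  Submodule.restrictScalars ℂ I = ⨆ N : ℕ, (Submodule.restrictScalars ℂ I ⊓ Vcomp n N)

/-- the exponent redistribution underlying `ψ_u`: in the sorted list
`i_1 ≤ ⋯ ≤ i_N` of the indices of the monomial `β^γ` (value `j` occurring `γ j`
times, `N = |γ|`), row `i` receives the block of positions
`[∑_{i'<i} u i', ∑_{i'≤i} u i')`, while value `j` occupies positions
`[∑_{j'<j} γ j', ∑_{j'≤j} γ j')`; hence the exponent of `α_{i,j}` is the size of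
the intersection of these two intervals. -/
def distrib (n d : ℕ) (u : Fin d → ℕ) (γ : Fin n →₀ ℕ) : (Fin d × Fin n) →₀ ℕ :=
  Finsupp.equivFunOnFinite.symm fun p : Fin d × Fin n =>
    min (∑ i ∈ Finset.univ.filter fun i : Fin d => (i : ℕ) ≤ (p.1 : ℕ), u i)
        (∑ j ∈ Finset.univ.filter fun j : Fin n => (j : ℕ) ≤ (p.2 : ℕ), γ j)
    - max (∑ i ∈ Finset.univ.filter fun i : Fin d => (i : ℕ) < (p.1 : ℕ), u i)
          (∑ j ∈ Finset.univ.filter fun j : Fin n => (j : ℕ) < (p.2 : ℕ), γ j)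

/-- the linear map `ψ_u : V → S` sending a monomial `β_{i_1} β_{i_2} ⋯ β_{i_N}`
with `i_1 ≤ i_2 ≤ ⋯ ≤ i_N` to
`(α_{1,i_1} ⋯ α_{1,i_{u_1}}) (α_{2,i_{u_1+1}} ⋯ α_{2,i_{u_1+u_2}}) ⋯`.
(Its restriction to `Vcomp n (∑ i, u i)` is the map `ψ_u : V_{|u|} → S_u` of the
paper.) -/
def psi (n d : ℕ) (u : Fin d → ℕ) :
    MvPolynomial (Fin n) ℂ →ₗ[ℂ] MvPolynomial (Fin d × Fin n) ℂ :=
  AddMonoidAlgebra.mapDomainLinearMap ℂ ℂ (distrib n d u)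

/-- `Υ(I) = I_R + ∑_{u} ψ_u(I_{|u|}) ⊆ S`. -/
def Upsilon (n d : ℕ) (I : Ideal (MvPolynomial (Fin n) ℂ)) :
    Submodule ℂ (MvPolynomial (Fin d × Fin n) ℂ) :=
  restrictScalars ℂ (IR n d) ⊔
    ⨆ u : Fin d → ℕ, Submodule.map (psi n d u) (restrictScalars ℂ I ⊓ Vcomp n (∑ i, u i))

/-- the irrelevant ideal `B_X = ∏_{i=1}^d (α_{i,1},…,α_{i,n}) ⊆ S`. -/
def BX (n d : ℕ) : Ideal (MvPolynomial (Fin d × Fin n) ℂ) :=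
  ∏ i : Fin d, Ideal.span (Set.range fun j : Fin n => X (i, j))

/-- the irrelevant ideal `B_Y = (β_1,…,β_n) ⊆ V`. -/
def BY (n : ℕ) : Ideal (MvPolynomial (Fin n) ℂ) :=
  Ideal.span (Set.range X)

/-- `Σ(J) = ⊕_{a ≥ 0} ⊕_{s ∈ ℰ} π(J_{a𝟏+s}) ⊆ V`, where
`ℰ = {0, e_1, e_1+e_2, …, e_1+⋯+e_{d-1}}` (the element `s` with `m` ones is
`fun i => if i < m then 1 else 0`). -/
def SigmaMap (n d : ℕ) (J : Ideal (MvPolynomial (Fin d × Fin n) ℂ)) :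
    Submodule ℂ (MvPolynomial (Fin n) ℂ) :=
  ⨆ a : ℕ, ⨆ m : Fin d, Submodule.map (piL n d)
    (restrictScalars ℂ J ⊓ Scomp n d (fun i => a + if (i : ℕ) < (m : ℕ) then 1 else 0))

/-- the set of tensors of rank at most `r`: sums of `r` decomposable tensors
`v_1 ⊗ ⋯ ⊗ v_d = ∏_i (∑_j v_i(j) x_{i,j})`. -/
def rankLE (n d r : ℕ) : Set (MvPolynomial (Fin d × Fin n) ℂ) :=
  {F | ∃ v : Fin r → Fin d → Fin n → ℂ,
    F = ∑ s : Fin r, ∏ i : Fin d, ∑ j : Fin n, C (v s i j) * X (i, j)}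

/-- `F` has border rank at most `r`: coefficientwise (finitely many coefficients are
involved), `F` lies in the closure of the set of tensors of rank at most `r`. -/
def brkLE (n d : ℕ) (F : MvPolynomial (Fin d × Fin n) ℂ) (r : ℕ) : Prop :=
  (fun m => coeff m F) ∈ closure ((fun G => fun m => coeff m G) '' rankLE n d r)

/-- the border rank of a tensor. -/
def brk (n d : ℕ) (F : MvPolynomial (Fin d × Fin n) ℂ) : ℕ :=
  sInf {r | brkLE n d F r}

/-- polynomials that are sums of `r` `d`-th powers of linear forms. -/
def srankLE (n d r : ℕ) : Set (MvPolynomial (Fin n) ℂ) :=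
  {p | ∃ c : Fin r → Fin n → ℂ, p = ∑ s : Fin r, (∑ j : Fin n, C (c s j) * X j) ^ d}

/-- `p` has symmetric border rank at most `r`. -/
def sbrkLE (n d : ℕ) (p : MvPolynomial (Fin n) ℂ) (r : ℕ) : Prop :=
  (fun m => coeff m p) ∈ closure ((fun q => fun m => coeff m q) '' srankLE n d r)

/-- the symmetric border rank of a degree-`d` form. -/
def sbrk (n d : ℕ) (p : MvPolynomial (Fin n) ℂ) : ℕ :=
  sInf {r | sbrkLE n d p r}

/-- `F` is a symmetric tensor: invariant under the permutations of the `d` factors. -/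
def IsSymm (n d : ℕ) (F : MvPolynomial (Fin d × Fin n) ℂ) : Prop :=
  ∀ τ : Equiv.Perm (Fin d), rename (Prod.map τ id) F = F

/-- the degree-`d` polynomial `p_F` corresponding to a symmetric tensor `F`, obtained
by identifying all the rows of variables (`x_{i,j} ↦ y_j`); `F` is the polarization
of `p_F`. -/
def pF (n d : ℕ) (F : MvPolynomial (Fin d × Fin n) ℂ) : MvPolynomial (Fin n) ℂ :=
  rename Prod.snd F

/-- `F` is concise: the contraction `(ℂ^n)^* → (ℂ^n)^{⊗(d-1)}` of the first tensor
factor, `w ↦ F(x_{1,j} := w_j)`, is injective. -/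
def Concise (n d : ℕ) (F : MvPolynomial (Fin d × Fin n) ℂ) : Prop :=
  Function.Injective fun w : Fin n → ℂ =>
    aeval (fun p : Fin d × Fin n => if (p.1 : ℕ) = 0 then C (w p.2) else X p) F

/-- the ideal `∑_{0<u<𝟏} S·Ann(F)_u` generated by the components `Ann(F)_u`,
`0 < u < 𝟏` (componentwise). -/
def midIdeal (n d : ℕ) (F : MvPolynomial (Fin d × Fin n) ℂ) :
    Ideal (MvPolynomial (Fin d × Fin n) ℂ) :=
  Ideal.span (⋃ u ∈ {u : Fin d → ℕ | 0 < u ∧ u < fun _ => 1},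
    ((ann F ⊓ Scomp n d u : Submodule ℂ (MvPolynomial (Fin d × Fin n) ℂ)) :
      Set (MvPolynomial (Fin d × Fin n) ℂ)))

/-- `F` is a *sharp* tensor:
(1) `Ann(F)` has exactly `n-1` minimal generators of multidegree `𝟏`;
(2) `dim (S/Ann F)_u = n` for all `0 < u < 𝟏`;
(3) `dim (S/(Ann(F)_{e_i+e_j}))_{s e_i + e_j} = n` for all `i ≠ j`, `1 ≤ s ≤ d-1`. -/
def Sharp (n d : ℕ) (F : MvPolynomial (Fin d × Fin n) ℂ) : Prop :=
  (finrank ℂ (ann F ⊓ Scomp n d fun _ => 1 :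
        Submodule ℂ (MvPolynomial (Fin d × Fin n) ℂ)) -
      finrank ℂ (restrictScalars ℂ (midIdeal n d F) ⊓ Scomp n d fun _ => 1 :
        Submodule ℂ (MvPolynomial (Fin d × Fin n) ℂ)) = n - 1) ∧
  (∀ u : Fin d → ℕ, 0 < u → u < (fun _ => 1) →
    finrank ℂ (Scomp n d u ⧸ Submodule.comap (Scomp n d u).subtype (ann F)) = n) ∧
  (∀ i j : Fin d, i ≠ j → ∀ s : ℕ, 1 ≤ s → s ≤ d - 1 →
    finrank ℂ (Scomp n d (Pi.single i s + Pi.single j 1) ⧸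
      Submodule.comap (Scomp n d (Pi.single i s + Pi.single j 1)).subtype
        (restrictScalars ℂ (Ideal.span
          ((ann F ⊓ Scomp n d (Pi.single i 1 + Pi.single j 1) :
            Submodule ℂ (MvPolynomial (Fin d × Fin n) ℂ)) :
            Set (MvPolynomial (Fin d × Fin n) ℂ))))) = n)


/-- partial sums of `v` below cutoff `s`. -/
def partS {k : ℕ} (v : Fin k → ℕ) (s : ℕ) : ℕ :=
  ∑ i ∈ Finset.univ.filter (fun i : Fin k => (i : ℕ) < s), v i

lemma psum_zero {k : ℕ} (v : Fin k → ℕ) : partS v 0 = 0 := by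
  simp [partS]

lemma psum_mono {k : ℕ} (v : Fin k → ℕ) : Monotone (partS v) := by
  intro s t hst
  apply Finset.sum_le_sum_of_subset
  intro i hi
  simp only [Finset.mem_filter, Finset.mem_univ, true_and] at hi ⊢
  omega

lemma psum_succ {k : ℕ} (v : Fin k → ℕ) (i : Fin k) :
    partS v ((i : ℕ) + 1) = partS v (i : ℕ) + v i := by
  unfold partS
  have h : Finset.univ.filter (fun i' : Fin k => (i' : ℕ) < (i : ℕ) + 1)
      = insert i (Finset.univ.filter (fun i' : Fin k => (i' : ℕ) < (i : ℕ))) := by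
    ext x
    simp only [Finset.mem_filter, Finset.mem_univ, true_and, Finset.mem_insert]
    constructor
    · intro hx
      rcases Nat.lt_succ_iff_lt_or_eq.mp hx with h | h
      · exact Or.inr h
      · exact Or.inl (Fin.ext h)
    · rintro (rfl | hx)
      · omega
      · omega
  rw [h, Finset.sum_insert (by simp)]
  ring

lemma psum_top {k : ℕ} (v : Fin k → ℕ) {s : ℕ} (hs : k ≤ s) :
    partS v s = ∑ i, v i := by
  unfold partS
  congr 1
  ext x
  simp only [Finset.mem_filter, Finset.mem_univ, true_and, iff_true]
  omega

lemma sum_card_inter (s : Finset ℕ) (g : ℕ → ℕ) (hg : Monotone g) (N : ℕ) :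
    ∑ t ∈ Finset.range N, (s ∩ Finset.Ico (g t) (g (t + 1))).card
      = (s ∩ Finset.Ico (g 0) (g N)).card := by
  induction N with
  | zero => simp
  | succ N ih =>
    rw [Finset.sum_range_succ, ih]
    have hu : Finset.Ico (g 0) (g N) ∪ Finset.Ico (g N) (g (N + 1))
        = Finset.Ico (g 0) (g (N + 1)) :=
      Finset.Ico_union_Ico_eq_Ico (hg (Nat.zero_le N)) (hg (Nat.le_succ N))
    rw [← hu, Finset.inter_union_distrib_left]
    rw [Finset.card_union_of_disjoint]
    exact (Finset.Ico_disjoint_Ico_consecutive (g 0) (g N) (g (N+1))).mono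
      Finset.inter_subset_right Finset.inter_subset_right

lemma key_interval (a b : ℕ) (g : ℕ → ℕ) (hg : Monotone g) (h0 : g 0 = 0) (N : ℕ)
    (hb : b ≤ g N) :
    ∑ t ∈ Finset.range N, (min b (g (t + 1)) - max a (g t)) = b - a := by
  have hterm : ∀ t, min b (g (t + 1)) - max a (g t)
      = (Finset.Ico a b ∩ Finset.Ico (g t) (g (t + 1))).card := by
    intro t
    rw [Finset.Ico_inter_Ico, Nat.card_Ico]
  simp only [hterm]
  rw [sum_card_inter _ g hg N, h0]
  have : Finset.Ico a b ∩ Finset.Ico 0 (g N) = Finset.Ico a b := by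
    apply Finset.inter_eq_left.mpr
    intro x hx
    simp only [Finset.mem_Ico] at hx ⊢
    omega
  rw [this, Nat.card_Ico]


variable {n d : ℕ}

lemma filter_le_eq_lt_succ {k : ℕ} (i : Fin k) :
    (Finset.univ.filter fun i' : Fin k => (i' : ℕ) ≤ (i : ℕ))
      = Finset.univ.filter fun i' : Fin k => (i' : ℕ) < (i : ℕ) + 1 := by
  apply Finset.filter_congr
  intro x _
  simp [Nat.lt_succ_iff]

lemma distrib_apply {n d : ℕ} (u : Fin d → ℕ) (γ : Fin n →₀ ℕ) (p : Fin d × Fin n) :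
    distrib n d u γ p
      = min (partS u ((p.1 : ℕ) + 1)) (partS (⇑γ) ((p.2 : ℕ) + 1))
        - max (partS u (p.1 : ℕ)) (partS (⇑γ) (p.2 : ℕ)) := by
  show (Finsupp.equivFunOnFinite.symm _ : _ →₀ ℕ) p = _
  simp only [Finsupp.coe_equivFunOnFinite_symm]
  rw [filter_le_eq_lt_succ p.1, filter_le_eq_lt_succ p.2]
  rfl

lemma distrib_rowsum {n d : ℕ} (u : Fin d → ℕ) (γ : Fin n →₀ ℕ)
    (h : ∑ i, u i ≤ ∑ j, γ j) (i : Fin d) :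
    ∑ j : Fin n, distrib n d u γ (i, j) = u i := by
  have : ∀ j : Fin n, distrib n d u γ (i, j)
      = min (partS u ((i : ℕ) + 1)) (partS (⇑γ) ((j : ℕ) + 1))
        - max (partS u (i : ℕ)) (partS (⇑γ) (j : ℕ)) := fun j => distrib_apply u γ (i, j)
  simp only [this]
  have hconv : ∑ j : Fin n, (min (partS u ((i : ℕ) + 1)) (partS (⇑γ) ((j : ℕ) + 1))
        - max (partS u (i : ℕ)) (partS (⇑γ) (j : ℕ)))
      = ∑ t ∈ Finset.range n, (min (partS u ((i : ℕ) + 1)) (partS (⇑γ) (t + 1))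
        - max (partS u (i : ℕ)) (partS (⇑γ) t)) :=
    Fin.sum_univ_eq_sum_range (fun t => min (partS u ((i : ℕ) + 1)) (partS (⇑γ) (t + 1))
        - max (partS u (i : ℕ)) (partS (⇑γ) t)) n
  rw [hconv, key_interval _ _ _ (psum_mono _) (psum_zero _) n ?_, psum_succ u i]
  · omega
  · rw [psum_top (⇑γ) (le_refl n)]
    calc partS u ((i : ℕ) + 1) ≤ partS u d := psum_mono u i.2
    _ = ∑ i', u i' := psum_top u (le_refl d)
    _ ≤ ∑ j, γ j := h

lemma distrib_colsum {n d : ℕ} (u : Fin d → ℕ) (γ : Fin n →₀ ℕ)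
    (h : ∑ j, γ j ≤ ∑ i, u i) (j : Fin n) :
    ∑ i : Fin d, distrib n d u γ (i, j) = γ j := by
  have : ∀ i : Fin d, distrib n d u γ (i, j)
      = min (partS (⇑γ) ((j : ℕ) + 1)) (partS u ((i : ℕ) + 1))
        - max (partS (⇑γ) (j : ℕ)) (partS u (i : ℕ)) := by
    intro i
    rw [distrib_apply u γ (i, j), min_comm, max_comm]
  simp only [this]
  have hconv : ∑ i : Fin d, (min (partS (⇑γ) ((j : ℕ) + 1)) (partS u ((i : ℕ) + 1))
        - max (partS (⇑γ) (j : ℕ)) (partS u (i : ℕ)))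
      = ∑ t ∈ Finset.range d, (min (partS (⇑γ) ((j : ℕ) + 1)) (partS u (t + 1))
        - max (partS (⇑γ) (j : ℕ)) (partS u t)) :=
    Fin.sum_univ_eq_sum_range (fun t => min (partS (⇑γ) ((j : ℕ) + 1)) (partS u (t + 1))
        - max (partS (⇑γ) (j : ℕ)) (partS u t)) d
  rw [hconv, key_interval _ _ _ (psum_mono _) (psum_zero _) d ?_, psum_succ (⇑γ) j]
  · omega
  · rw [psum_top u (le_refl d)]
    calc partS (⇑γ) ((j : ℕ) + 1) ≤ partS (⇑γ) n := psum_mono _ j.2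
    _ = ∑ j', γ j' := psum_top (⇑γ) (le_refl n)
    _ ≤ ∑ i, u i := h


/-- column sums of an exponent matrix. -/
def colsum (m : (Fin d × Fin n) →₀ ℕ) : Fin n →₀ ℕ :=
  Finsupp.equivFunOnFinite.symm fun j => ∑ i, m (i, j)

lemma colsum_apply (m : (Fin d × Fin n) →₀ ℕ) (j : Fin n) :
    colsum m j = ∑ i, m (i, j) := by
  simp [colsum]

/-- rectangle partial sums. -/
def Rsum (m : (Fin d × Fin n) →₀ ℕ) (s t : ℕ) : ℕ :=
  ∑ p : Fin d × Fin n, if (p.1 : ℕ) < s ∧ (p.2 : ℕ) < t then m p else 0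

lemma psum_eq_sum_ite {k : ℕ} (v : Fin k → ℕ) (s : ℕ) :
    partS v s = ∑ i : Fin k, if (i : ℕ) < s then v i else 0 :=
  Finset.sum_filter _ _

lemma Rsum_right (m : (Fin d × Fin n) →₀ ℕ) (u : Fin d → ℕ)
    (hrow : ∀ i, ∑ j, m (i, j) = u i) (s : ℕ) :
    Rsum m s n = partS u s := by
  rw [Rsum, Fintype.sum_prod_type, psum_eq_sum_ite]
  refine Finset.sum_congr rfl fun i _ => ?_
  by_cases hi : (i : ℕ) < s
  · simp only [hi, true_and, if_true]
    rw [← hrow i]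
    exact Finset.sum_congr rfl fun j _ => by simp [j.isLt]
  · simp [hi]

lemma Rsum_top (m : (Fin d × Fin n) →₀ ℕ) (t : ℕ) :
    Rsum m d t = partS (⇑(colsum m)) t := by
  rw [Rsum, Fintype.sum_prod_type_right, psum_eq_sum_ite]
  refine Finset.sum_congr rfl fun j _ => ?_
  by_cases hj : (j : ℕ) < t
  · simp only [hj, and_true, if_true, colsum_apply]
    exact Finset.sum_congr rfl fun i _ => by simp [i.isLt]
  · simp [hj]

lemma Rsum_mono (m : (Fin d × Fin n) →₀ ℕ) {s t s' t' : ℕ} (hs : s ≤ s') (ht : t ≤ t') :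
    Rsum m s t ≤ Rsum m s' t' := by
  refine Finset.sum_le_sum fun p _ => ?_
  split_ifs <;> omega

lemma Rsum_step (m : (Fin d × Fin n) →₀ ℕ) (i : Fin d) (j : Fin n) :
    Rsum m ((i : ℕ) + 1) ((j : ℕ) + 1) + Rsum m (i : ℕ) (j : ℕ)
      = Rsum m ((i : ℕ) + 1) (j : ℕ) + Rsum m (i : ℕ) ((j : ℕ) + 1) + m (i, j) := by
  have hm : m (i, j) = ∑ p : Fin d × Fin n, if p = (i, j) then m p else 0 := by
    rw [Finset.sum_ite_eq' Finset.univ (i, j) m]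
    simp
  unfold Rsum
  rw [hm, ← Finset.sum_add_distrib, ← Finset.sum_add_distrib, ← Finset.sum_add_distrib]
  refine Finset.sum_congr rfl fun p _ => ?_
  have hpe : (p = (i, j)) ↔ ((p.1 : ℕ) = (i : ℕ) ∧ (p.2 : ℕ) = (j : ℕ)) := by
    simp [Prod.ext_iff, Fin.ext_iff]
  simp only [hpe]
  split_ifs <;> omega

/-- `m` has no inversions. -/
def Sorted (m : (Fin d × Fin n) →₀ ℕ) : Prop :=
  ∀ i k : Fin d, ∀ j l : Fin n, i < k → j < l → m (i, l) = 0 ∨ m (k, j) = 0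

lemma exists_pos_of_lt_sum {f : Fin d × Fin n → ℕ}
    (h : 0 < ∑ p : Fin d × Fin n, f p) : ∃ p, f p ≠ 0 := by
  by_contra hall
  push_neg at hall
  rw [Finset.sum_eq_zero fun p _ => hall p] at h
  omega

lemma Rsum_rect (m : (Fin d × Fin n) →₀ ℕ) (u : Fin d → ℕ)
    (hrow : ∀ i, ∑ j, m (i, j) = u i) (hsort : Sorted m)
    {s t : ℕ} (hs : s ≤ d) (ht : t ≤ n) :
    Rsum m s t = min (partS u s) (partS (⇑(colsum m)) t) := by
  have hle1 : Rsum m s t ≤ partS u s := by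
    rw [← Rsum_right m u hrow s]; exact Rsum_mono m le_rfl ht
  have hle2 : Rsum m s t ≤ partS (⇑(colsum m)) t := by
    rw [← Rsum_top m t]; exact Rsum_mono m hs le_rfl
  rcases Nat.lt_or_ge (Rsum m s t) (min (partS u s) (partS (⇑(colsum m)) t)) with hlt | hge
  swap
  · omega
  exfalso
  have h1 : Rsum m s t < Rsum m s n := by
    rw [Rsum_right m u hrow s]; omega
  have h2 : Rsum m s t < Rsum m d t := by
    rw [Rsum_top m t]; omega
  have hsplit1 : Rsum m s n = Rsum m s t
      + ∑ p : Fin d × Fin n, (if (p.1 : ℕ) < s ∧ t ≤ (p.2 : ℕ) then m p else 0) := by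
    unfold Rsum
    rw [← Finset.sum_add_distrib]
    refine Finset.sum_congr rfl fun p _ => ?_
    have := p.2.isLt
    split_ifs <;> omega
  have hsplit2 : Rsum m d t = Rsum m s t
      + ∑ p : Fin d × Fin n, (if s ≤ (p.1 : ℕ) ∧ (p.2 : ℕ) < t then m p else 0) := by
    unfold Rsum
    rw [← Finset.sum_add_distrib]
    refine Finset.sum_congr rfl fun p _ => ?_
    have := p.1.isLt
    split_ifs <;> omega
  obtain ⟨p, hp⟩ : ∃ p : Fin d × Fin n,
      (if (p.1 : ℕ) < s ∧ t ≤ (p.2 : ℕ) then m p else 0) ≠ 0 := by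
    apply exists_pos_of_lt_sum; omega
  obtain ⟨q, hq⟩ : ∃ q : Fin d × Fin n,
      (if s ≤ (q.1 : ℕ) ∧ (q.2 : ℕ) < t then m q else 0) ≠ 0 := by
    apply exists_pos_of_lt_sum; omega
  have hpc : (p.1 : ℕ) < s ∧ t ≤ (p.2 : ℕ) := by
    by_contra hc; rw [if_neg hc] at hp; exact hp rfl
  have hqc : s ≤ (q.1 : ℕ) ∧ (q.2 : ℕ) < t := by
    by_contra hc; rw [if_neg hc] at hq; exact hq rfl
  rw [if_pos hpc] at hp
  rw [if_pos hqc] at hq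
  have h12 : p.1 < q.1 := by omega
  have h21 : q.2 < p.2 := by omega
  rcases hsort p.1 q.1 q.2 p.2 h12 h21 with h | h
  · exact hp (by simpa using h)
  · exact hq (by simpa using h)

lemma sorted_eq_distrib (m : (Fin d × Fin n) →₀ ℕ) (u : Fin d → ℕ)
    (hrow : ∀ i, ∑ j, m (i, j) = u i) (hsort : Sorted m) :
    m = distrib n d u (colsum m) := by
  ext p
  obtain ⟨i, j⟩ := p
  rw [distrib_apply]
  show m (i, j) = min (partS u ((i : ℕ) + 1)) (partS (⇑(colsum m)) ((j : ℕ) + 1))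
    - max (partS u (i : ℕ)) (partS (⇑(colsum m)) (j : ℕ))
  have hi1 : (i : ℕ) + 1 ≤ d := i.isLt
  have hj1 : (j : ℕ) + 1 ≤ n := j.isLt
  have h11 := Rsum_rect m u hrow hsort hi1 hj1
  have h00 := Rsum_rect m u hrow hsort (le_of_lt i.isLt) (le_of_lt j.isLt)
  have h10 := Rsum_rect m u hrow hsort hi1 (le_of_lt j.isLt)
  have h01 := Rsum_rect m u hrow hsort (le_of_lt i.isLt) hj1
  have hstep := Rsum_step m i j
  have hm1 : partS u (i : ℕ) ≤ partS u ((i : ℕ) + 1) := psum_mono u (Nat.le_succ _)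
  have hm2 : partS (⇑(colsum m)) (j : ℕ) ≤ partS (⇑(colsum m)) ((j : ℕ) + 1) :=
    psum_mono _ (Nat.le_succ _)
  omega


/-! ### Bridge lemmas between combinatorics and polynomial structures -/

/-- the weight function underlying `Scomp`. -/
abbrev wt (n d : ℕ) : Fin d × Fin n → (Fin d → ℕ) := fun p => Pi.single p.1 1

lemma sum_ite_eq_fin {k : ℕ} (g : Fin k → ℕ) (i : Fin k) :
    ∑ i' : Fin k, (if i' = i then g i' else 0) = g i := by
  simp

lemma weight_apply_row (m : (Fin d × Fin n) →₀ ℕ) (i : Fin d) :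
    (Finsupp.weight (wt n d) m) i = ∑ j, m (i, j) := by
  rw [Finsupp.weight_apply, Finsupp.sum]
  rw [Finset.sum_apply]
  have h1 : ∀ p ∈ m.support, (m p • Pi.single p.1 (1 : ℕ) : Fin d → ℕ) i
      = (if i = p.1 then m p else 0) := by
    intro p _
    rw [Pi.smul_apply, Pi.single_apply]
    split_ifs <;> simp
  rw [Finset.sum_congr rfl h1]
  rw [Finset.sum_subset (Finset.subset_univ m.support)]
  · rw [Fintype.sum_prod_type]
    have h2 : ∀ i' : Fin d, ∑ j : Fin n, (if i = (i', j).1 then m (i', j) else 0)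
        = if i = i' then (∑ j, m (i', j)) else 0 := by
      intro i'
      by_cases h : i = i' <;> simp [h]
    rw [Finset.sum_congr rfl fun i' _ => h2 i']
    simp
  · intro p _ hp
    rw [Finsupp.notMem_support_iff.mp hp]
    simp

lemma mem_Scomp_iff {u : Fin d → ℕ} {F : MvPolynomial (Fin d × Fin n) ℂ} :
    F ∈ Scomp n d u ↔ ∀ m ∈ F.support, ∀ i, ∑ j, m (i, j) = u i := by
  rw [Scomp, mem_weightedHomogeneousSubmodule]
  constructor
  · intro h m hm i
    rw [← weight_apply_row m i, h (mem_support_iff.mp hm)]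
  · intro h m hm
    funext i
    rw [weight_apply_row m i]
    exact h m (mem_support_iff.mpr hm) i

lemma monomial_mem_Scomp {u : Fin d → ℕ} {m : (Fin d × Fin n) →₀ ℕ} (c : ℂ)
    (h : ∀ i, ∑ j, m (i, j) = u i) :
    (monomial m c : MvPolynomial (Fin d × Fin n) ℂ) ∈ Scomp n d u := by
  apply isWeightedHomogeneous_monomial
  funext i
  rw [weight_apply_row m i]
  exact h i

lemma weight_one_eq (γ : Fin n →₀ ℕ) :
    (Finsupp.weight (1 : Fin n → ℕ) γ) = ∑ j, γ j := by
  rw [Finsupp.weight_apply]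
  rw [Finsupp.sum_fintype]
  · simp
  · intro j; simp

lemma mem_Vcomp_iff {N : ℕ} {F : MvPolynomial (Fin n) ℂ} :
    F ∈ Vcomp n N ↔ ∀ γ ∈ F.support, ∑ j, γ j = N := by
  rw [Vcomp, mem_homogeneousSubmodule]
  constructor
  · intro h γ hγ
    rw [← weight_one_eq γ]
    exact h (mem_support_iff.mp hγ)
  · intro h γ hγ
    rw [weight_one_eq γ]
    exact h γ (mem_support_iff.mpr hγ)

lemma monomial_mem_Vcomp {N : ℕ} {γ : Fin n →₀ ℕ} (c : ℂ) (h : ∑ j, γ j = N) :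
    (monomial γ c : MvPolynomial (Fin n) ℂ) ∈ Vcomp n N := by
  apply isWeightedHomogeneous_monomial
  rw [weight_one_eq γ]
  exact h

lemma psi_monomial (u : Fin d → ℕ) (γ : Fin n →₀ ℕ) (c : ℂ) :
    psi n d u (monomial γ c) = monomial (distrib n d u γ) c := by
  rw [← single_eq_monomial, ← single_eq_monomial]
  show AddMonoidAlgebra.mapDomainLinearMap ℂ ℂ (distrib n d u) (AddMonoidAlgebra.single γ c) = _
  rw [AddMonoidAlgebra.mapDomainLinearMap_single]

lemma prod_monomial_one {τ σ : Type*} (s : Finset τ) (a : τ → σ →₀ ℕ) :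
    (∏ x ∈ s, (monomial (a x) (1 : ℂ) : MvPolynomial σ ℂ))
      = monomial (∑ x ∈ s, a x) 1 := by
  induction s using Finset.cons_induction with
  | empty => simp
  | cons t s hts ih =>
    rw [Finset.prod_cons, Finset.sum_cons, ih, monomial_mul, one_mul]

lemma sum_single_snd (m : (Fin d × Fin n) →₀ ℕ) :
    ∑ p ∈ m.support, Finsupp.single p.2 (m p) = colsum m := by
  rw [Finset.sum_subset (Finset.subset_univ m.support)]
  · ext j
    rw [Finset.sum_apply']
    have h1 : ∀ p : Fin d × Fin n, Finsupp.single p.2 (m p) j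
        = if p.2 = j then m p else 0 := fun p => Finsupp.single_apply
    rw [Finset.sum_congr rfl fun p _ => h1 p, Fintype.sum_prod_type]
    have h2 : ∀ i : Fin d, ∑ j' : Fin n, (if ((i, j') : Fin d × Fin n).2 = j then m (i, j') else 0)
        = m (i, j) := fun i => sum_ite_eq_fin (fun j' => m (i, j')) j
    rw [Finset.sum_congr rfl fun i _ => h2 i, colsum_apply]
  · intro p _ hp
    rw [Finsupp.notMem_support_iff.mp hp, Finsupp.single_zero]

lemma piAlg_monomial (m : (Fin d × Fin n) →₀ ℕ) (c : ℂ) :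
    piAlg n d (monomial m c) = monomial (colsum m) c := by
  rw [piAlg, aeval_monomial]
  have h1 : (Finsupp.prod m fun p k => (X p.2 : MvPolynomial (Fin n) ℂ) ^ k)
      = monomial (colsum m) 1 := by
    rw [Finsupp.prod]
    have h2 : ∀ p ∈ m.support, (X p.2 : MvPolynomial (Fin n) ℂ) ^ m p
        = monomial (Finsupp.single p.2 (m p)) 1 := fun p _ => X_pow_eq_monomial
    rw [Finset.prod_congr rfl h2]
    rw [prod_monomial_one, sum_single_snd]
  rw [h1, algebraMap_eq, C_mul_monomial, mul_one]

lemma colsum_distrib_eq (u : Fin d → ℕ) (γ : Fin n →₀ ℕ) (h : ∑ j, γ j = ∑ i, u i) :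
    colsum (distrib n d u γ) = γ := by
  ext j
  rw [colsum_apply]
  exact distrib_colsum u γ (le_of_eq h) j

lemma piL_psi (u : Fin d → ℕ) {v : MvPolynomial (Fin n) ℂ} (hv : v ∈ Vcomp n (∑ i, u i)) :
    piL n d (psi n d u v) = v := by
  conv_lhs => rw [as_sum v]
  rw [map_sum, map_sum]
  conv_rhs => rw [as_sum v]
  refine Finset.sum_congr rfl fun γ hγ => ?_
  rw [psi_monomial]
  show piAlg n d _ = _
  rw [piAlg_monomial, colsum_distrib_eq u γ (mem_Vcomp_iff.mp hv γ hγ)]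

lemma psi_mem_Scomp (u : Fin d → ℕ) {v : MvPolynomial (Fin n) ℂ}
    (hv : v ∈ Vcomp n (∑ i, u i)) : psi n d u v ∈ Scomp n d u := by
  rw [as_sum v, map_sum]
  refine Submodule.sum_mem _ fun γ hγ => ?_
  rw [psi_monomial]
  exact monomial_mem_Scomp _ fun i =>
    distrib_rowsum u γ (le_of_eq (mem_Vcomp_iff.mp hv γ hγ).symm) i

lemma piL_mem_Vcomp (u : Fin d → ℕ) {F : MvPolynomial (Fin d × Fin n) ℂ}
    (hF : F ∈ Scomp n d u) : piL n d F ∈ Vcomp n (∑ i, u i) := by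
  rw [as_sum F, map_sum]
  refine Submodule.sum_mem _ fun m hm => ?_
  show piAlg n d _ ∈ _
  rw [piAlg_monomial]
  apply monomial_mem_Vcomp
  have hr := mem_Scomp_iff.mp hF m hm
  calc ∑ j, (colsum m) j = ∑ j : Fin n, ∑ i, m (i, j) := by
        exact Finset.sum_congr rfl fun j _ => colsum_apply m j
    _ = ∑ i : Fin d, ∑ j, m (i, j) := Finset.sum_comm
    _ = ∑ i, u i := Finset.sum_congr rfl fun i _ => hr i

lemma IR_le_ker : ∀ x ∈ IR n d, piAlg n d x = 0 := by
  intro x hx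
  have h : IR n d ≤ RingHom.ker (piAlg n d).toRingHom := by
    rw [IR, Ideal.span_le]
    rintro q ⟨i, k, j, l, hik, hjl, rfl⟩
    simp only [SetLike.mem_coe, RingHom.mem_ker]
    simp [piAlg, mul_comm]
  exact h hx

/-! ### Straightening modulo `I_R` -/

/-- the disorder measure used for the straightening induction. -/
def Dm (m : (Fin d × Fin n) →₀ ℕ) : ℕ :=
  ∑ p : Fin d × Fin n, (p.1 : ℕ) * (p.2 : ℕ) * m p

lemma Dm_add (a b : (Fin d × Fin n) →₀ ℕ) : Dm (a + b) = Dm a + Dm b := by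
  simp [Dm, Finsupp.add_apply, mul_add, Finset.sum_add_distrib]

lemma Dm_single (p : Fin d × Fin n) (c : ℕ) :
    Dm (Finsupp.single p c) = (p.1 : ℕ) * (p.2 : ℕ) * c := by
  unfold Dm
  have h : ∀ q : Fin d × Fin n, (q.1 : ℕ) * (q.2 : ℕ) * (Finsupp.single p c) q
      = if p = q then (q.1 : ℕ) * (q.2 : ℕ) * c else 0 := by
    intro q
    rw [Finsupp.single_apply]
    split_ifs <;> simp
  rw [Finset.sum_congr rfl fun q _ => h q, Finset.sum_ite_eq]
  simp

lemma sum_all {u : Fin d → ℕ} (m : (Fin d × Fin n) →₀ ℕ)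
    (hrow : ∀ i, ∑ j, m (i, j) = u i) :
    ∑ p : Fin d × Fin n, m p = ∑ i, u i := by
  rw [Fintype.sum_prod_type]
  exact Finset.sum_congr rfl fun i _ => hrow i

lemma Dm_le {u : Fin d → ℕ} (m : (Fin d × Fin n) →₀ ℕ)
    (hrow : ∀ i, ∑ j, m (i, j) = u i) :
    Dm m ≤ d * n * ∑ i, u i := by
  calc Dm m ≤ ∑ p : Fin d × Fin n, d * n * m p := by
        refine Finset.sum_le_sum fun p _ => ?_
        exact Nat.mul_le_mul_right _ (Nat.mul_le_mul (le_of_lt p.1.isLt) (le_of_lt p.2.isLt))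
    _ = d * n * ∑ p : Fin d × Fin n, m p := by rw [← Finset.mul_sum]
    _ = d * n * ∑ i, u i := by rw [sum_all m hrow]

lemma cross_ineq {i k j l : ℕ} (hik : i < k) (hjl : j < l) :
    i * l + k * j + 1 ≤ i * j + k * l := by
  nlinarith

lemma rowsum_add (a b : (Fin d × Fin n) →₀ ℕ) (i' : Fin d) :
    ∑ j', (a + b) (i', j') = (∑ j', a (i', j')) + ∑ j', b (i', j') := by
  simp [Finsupp.add_apply, Finset.sum_add_distrib]

lemma rowsum_single (p : Fin d × Fin n) (c : ℕ) (i' : Fin d) :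
    ∑ j', (Finsupp.single p c) (i', j') = if p.1 = i' then c else 0 := by
  have h : ∀ j', (Finsupp.single p c) (i', j') = if p = (i', j') then c else 0 :=
    fun _ => Finsupp.single_apply
  rw [Finset.sum_congr rfl fun j' _ => h j']
  rcases p with ⟨p1, p2⟩
  by_cases hp : p1 = i'
  · subst hp
    have h2 : ∀ j', (if ((p1, p2) : Fin d × Fin n) = (p1, j') then c else 0)
        = if p2 = j' then c else 0 := by
      intro j'; simp [Prod.ext_iff]
    rw [Finset.sum_congr rfl fun j' _ => h2 j', Finset.sum_ite_eq]
    simp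
  · have h2 : ∀ j', (if ((p1, p2) : Fin d × Fin n) = (i', j') then c else 0) = 0 := by
      intro j'; simp [Prod.ext_iff, hp]
    rw [Finset.sum_congr rfl fun j' _ => h2 j']
    simp [hp]

lemma X_eq_monomial (p : Fin d × Fin n) :
    (X p : MvPolynomial (Fin d × Fin n) ℂ) = monomial (Finsupp.single p 1) 1 := by
  rw [← pow_one (X p), X_pow_eq_monomial]

lemma swap_step {u : Fin d → ℕ} (m : (Fin d × Fin n) →₀ ℕ)
    (hrow : ∀ i, ∑ j, m (i, j) = u i) (hns : ¬ Sorted m) :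
    ∃ m' : (Fin d × Fin n) →₀ ℕ, (∀ i, ∑ j, m' (i, j) = u i) ∧ Dm m + 1 ≤ Dm m' ∧
      ((monomial m' 1 : MvPolynomial (Fin d × Fin n) ℂ) - monomial m 1) ∈ IR n d := by
  unfold Sorted at hns
  push_neg at hns
  obtain ⟨i, k, j, l, hik, hjl, h1, h2⟩ := hns
  have hne : ((i, l) : Fin d × Fin n) ≠ (k, j) := by
    simp only [ne_eq, Prod.mk.injEq, not_and]
    intro h; exact absurd h (Fin.ne_of_lt hik)
  set base : (Fin d × Fin n) →₀ ℕ := Finsupp.equivFunOnFinite.symm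
    (fun q => if q = (i, l) ∨ q = (k, j) then m q - 1 else m q) with hbase
  have hbase_apply : ∀ q, base q = if q = (i, l) ∨ q = (k, j) then m q - 1 else m q :=
    fun q => rfl
  have hm : m = base + Finsupp.single (i, l) 1 + Finsupp.single (k, j) 1 := by
    ext q
    simp only [Finsupp.add_apply, Finsupp.single_apply, hbase_apply]
    by_cases hq1 : q = (i, l)
    · subst hq1
      rw [if_pos (Or.inl rfl), if_pos rfl, if_neg (Ne.symm hne)]
      have := h1; omega
    · by_cases hq2 : q = (k, j)
      · subst hq2
        rw [if_pos (Or.inr rfl), if_neg (fun h => hq1 h.symm), if_pos rfl]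
        have := h2; omega
      · rw [if_neg (by tauto), if_neg (fun h => hq1 h.symm), if_neg (fun h => hq2 h.symm)]
        omega
  refine ⟨base + Finsupp.single (i, j) 1 + Finsupp.single (k, l) 1, ?_, ?_, ?_⟩
  · intro i'
    have hml : ∑ j', m (i', j') = u i' := hrow i'
    rw [hm] at hml
    rw [rowsum_add, rowsum_add, rowsum_single, rowsum_single]
    rw [rowsum_add, rowsum_add, rowsum_single, rowsum_single] at hml
    simpa using hml
  · rw [hm, Dm_add, Dm_add, Dm_add, Dm_add, Dm_single, Dm_single, Dm_single, Dm_single]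
    have := cross_ineq hik hjl
    simp only [mul_one]
    omega
  · have hgen : ((X (i, j) * X (k, l) - X (i, l) * X (k, j) :
        MvPolynomial (Fin d × Fin n) ℂ)) ∈ IR n d :=
      Ideal.subset_span ⟨i, k, j, l, hik, hjl, rfl⟩
    have hmul := Ideal.mul_mem_left (IR n d) (monomial base 1) hgen
    have heq : (monomial base 1 : MvPolynomial (Fin d × Fin n) ℂ)
        * (X (i, j) * X (k, l) - X (i, l) * X (k, j))
        = monomial (base + Finsupp.single (i, j) 1 + Finsupp.single (k, l) 1) 1
          - monomial m 1 := by
      rw [mul_sub, X_eq_monomial, X_eq_monomial, X_eq_monomial, X_eq_monomial]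
      rw [monomial_mul, monomial_mul, monomial_mul, monomial_mul]
      simp only [mul_one]
      rw [← add_assoc, ← add_assoc, ← hm]
    rwa [heq] at hmul

lemma colsum_total {u : Fin d → ℕ} (m : (Fin d × Fin n) →₀ ℕ)
    (hrow : ∀ i, ∑ j, m (i, j) = u i) :
    ∑ j, colsum m j = ∑ i, u i := by
  calc ∑ j, colsum m j = ∑ j : Fin n, ∑ i, m (i, j) :=
        Finset.sum_congr rfl fun j _ => colsum_apply m j
    _ = ∑ i : Fin d, ∑ j, m (i, j) := Finset.sum_comm
    _ = ∑ i, u i := Finset.sum_congr rfl fun i _ => hrow i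

lemma sorted_case {u : Fin d → ℕ} (m : (Fin d × Fin n) →₀ ℕ)
    (hrow : ∀ i, ∑ j, m (i, j) = u i) (hsort : Sorted m) :
    (monomial m 1 : MvPolynomial (Fin d × Fin n) ℂ)
      ∈ Submodule.map (psi n d u) (Vcomp n (∑ i, u i)) := by
  refine ⟨monomial (colsum m) 1, monomial_mem_Vcomp 1 (colsum_total m hrow), ?_⟩
  rw [psi_monomial, ← sorted_eq_distrib m u hrow hsort]

lemma straighten_monomial {u : Fin d → ℕ} (m : (Fin d × Fin n) →₀ ℕ)
    (hrow : ∀ i, ∑ j, m (i, j) = u i) :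
    (monomial m 1 : MvPolynomial (Fin d × Fin n) ℂ)
      ∈ Submodule.restrictScalars ℂ (IR n d) ⊔ Submodule.map (psi n d u) (Vcomp n (∑ i, u i)) := by
  suffices H : ∀ K : ℕ, ∀ m : (Fin d × Fin n) →₀ ℕ, (∀ i, ∑ j, m (i, j) = u i) →
      d * n * (∑ i, u i) ≤ Dm m + K →
      (monomial m 1 : MvPolynomial (Fin d × Fin n) ℂ)
        ∈ Submodule.restrictScalars ℂ (IR n d) ⊔ Submodule.map (psi n d u) (Vcomp n (∑ i, u i)) by
    exact H (d * n * (∑ i, u i)) m hrow (by omega)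
  intro K
  induction K with
  | zero =>
    intro m hrow hb
    by_cases hsort : Sorted m
    · exact Submodule.mem_sup_right (sorted_case m hrow hsort)
    · exfalso
      obtain ⟨m', hrow', hD, _⟩ := swap_step m hrow hsort
      have := Dm_le m' hrow'
      have := Dm_le m hrow
      omega
  | succ K ih =>
    intro m hrow hb
    by_cases hsort : Sorted m
    · exact Submodule.mem_sup_right (sorted_case m hrow hsort)
    · obtain ⟨m', hrow', hD, hIRmem⟩ := swap_step m hrow hsort
      have heq : (monomial m 1 : MvPolynomial (Fin d × Fin n) ℂ)
          = monomial m' 1 - (monomial m' 1 - monomial m 1) := by ring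
      rw [heq]
      refine Submodule.sub_mem _ (ih m' hrow' (by omega)) (Submodule.mem_sup_left ?_)
      exact hIRmem

lemma Scomp_le_straight (u : Fin d → ℕ) :
    Scomp n d u ≤ Submodule.restrictScalars ℂ (IR n d)
      ⊔ Submodule.map (psi n d u) (Vcomp n (∑ i, u i)) := by
  intro x hx
  rw [as_sum x]
  refine Submodule.sum_mem _ fun m hm => ?_
  have h : (monomial m (coeff m x) : MvPolynomial (Fin d × Fin n) ℂ)
      = coeff m x • monomial m 1 := by rw [smul_monomial, smul_eq_mul, mul_one]
  rw [h]
  exact Submodule.smul_mem _ _ (straighten_monomial m fun i => mem_Scomp_iff.mp hx m hm i)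

lemma Scomp_le_psi_of_small (u : Fin d → ℕ) (hN : ∑ i, u i ≤ 1) :
    Scomp n d u ≤ Submodule.map (psi n d u) (Vcomp n (∑ i, u i)) := by
  intro x hx
  rw [as_sum x]
  refine Submodule.sum_mem _ fun m hm => ?_
  have hrow : ∀ i, ∑ j, m (i, j) = u i := fun i => mem_Scomp_iff.mp hx m hm i
  have hsort : Sorted m := by
    intro i k j l hik hjl
    by_contra hc
    push_neg at hc
    have hp : ((i, l) : Fin d × Fin n) ≠ (k, j) := by
      simp only [ne_eq, Prod.mk.injEq, not_and]
      intro h; exact absurd h (Fin.ne_of_lt hik)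
    have hsub : ({(i, l), (k, j)} : Finset (Fin d × Fin n)).sum m
        ≤ ∑ p : Fin d × Fin n, m p :=
      Finset.sum_le_sum_of_subset (Finset.subset_univ _)
    rw [Finset.sum_pair hp] at hsub
    rw [sum_all m hrow] at hsub
    have hc1 := hc.1; have hc2 := hc.2
    omega
  have h : (monomial m (coeff m x) : MvPolynomial (Fin d × Fin n) ℂ)
      = coeff m x • monomial m 1 := by rw [smul_monomial, smul_eq_mul, mul_one]
  rw [h]
  exact Submodule.smul_mem _ _ (sorted_case m hrow hsort)

/-! ### Finite-dimensionality and dimension comparisons -/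

lemma fd_of_supports {σ : Type*} (W : Submodule ℂ (MvPolynomial σ ℂ)) (s : Set (σ →₀ ℕ))
    (hs : s.Finite) (h : ∀ F ∈ W, ∀ m ∈ F.support, m ∈ s) : FiniteDimensional ℂ W := by
  have hle : W ≤ Submodule.span ℂ ((fun m => (monomial m 1 : MvPolynomial σ ℂ)) '' s) := by
    intro F hF
    rw [as_sum F]
    refine Submodule.sum_mem _ fun m hm => ?_
    have he : (monomial m (coeff m F) : MvPolynomial σ ℂ) = coeff m F • monomial m 1 := by
      rw [smul_monomial, smul_eq_mul, mul_one]
    rw [he]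
    exact Submodule.smul_mem _ _ (Submodule.subset_span ⟨m, h F hF m hm, rfl⟩)
  have hfd : FiniteDimensional ℂ
      (Submodule.span ℂ ((fun m => (monomial m 1 : MvPolynomial σ ℂ)) '' s)) :=
    FiniteDimensional.span_of_finite ℂ (hs.image _)
  exact Submodule.finiteDimensional_of_le hle

lemma fd_Vcomp (N : ℕ) : FiniteDimensional ℂ (Vcomp n N) := by
  refine fd_of_supports _ {γ : Fin n →₀ ℕ | Finsupp.degree γ ≤ N}
    (Finsupp.finite_of_degree_le N) fun F hF γ hγ => ?_
  have h1 : ∑ j, γ j = N := mem_Vcomp_iff.mp hF γ hγ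
  have h2 : Finsupp.degree γ ≤ ∑ j, γ j :=
    Finset.sum_le_sum_of_subset (Finset.subset_univ _)
  simp only [Set.mem_setOf_eq]
  omega

lemma fd_Scomp (u : Fin d → ℕ) : FiniteDimensional ℂ (Scomp n d u) := by
  refine fd_of_supports _ {m : (Fin d × Fin n) →₀ ℕ | Finsupp.degree m ≤ ∑ i, u i}
    (Finsupp.finite_of_degree_le _) fun F hF m hm => ?_
  have h1 : ∑ p : Fin d × Fin n, m p = ∑ i, u i :=
    sum_all m fun i => mem_Scomp_iff.mp hF m hm i
  have h2 : Finsupp.degree m ≤ ∑ p : Fin d × Fin n, m p :=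
    Finset.sum_le_sum_of_subset (Finset.subset_univ _)
  simp only [Set.mem_setOf_eq]
  omega

lemma finrank_le_of_surj {A B : Type*} [AddCommGroup A] [Module ℂ A] [AddCommGroup B]
    [Module ℂ B] [FiniteDimensional ℂ A] (f : A →ₗ[ℂ] B) (hf : Function.Surjective f) :
    finrank ℂ B ≤ finrank ℂ A := by
  have h := LinearMap.finrank_range_le f
  rwa [LinearMap.range_eq_top.mpr hf, finrank_top] at h

lemma finrank_Vcomp_mono (hn : 0 < n) (a : ℕ) :
    finrank ℂ (Vcomp n a) ≤ finrank ℂ (Vcomp n (a + 1)) := by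
  haveI := fd_Vcomp (n := n) (a + 1)
  have hmem : ∀ x : Vcomp n a, (X (⟨0, hn⟩ : Fin n)) * (x : MvPolynomial (Fin n) ℂ)
      ∈ Vcomp n (a + 1) := by
    intro x
    have hx : (x : MvPolynomial (Fin n) ℂ).IsHomogeneous a := x.2
    have := (isHomogeneous_X ℂ (⟨0, hn⟩ : Fin n)).mul hx
    rwa [add_comm] at this
  set f : Vcomp n a →ₗ[ℂ] Vcomp n (a + 1) :=
    LinearMap.codRestrict _
      ((LinearMap.mulLeft ℂ (X (⟨0, hn⟩ : Fin n))) ∘ₗ (Vcomp n a).subtype) hmem with hf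
  have hinj : Function.Injective f := by
    intro x y hxy
    have h1 : (X (⟨0, hn⟩ : Fin n)) * (x : MvPolynomial (Fin n) ℂ)
        = (X (⟨0, hn⟩ : Fin n)) * (y : MvPolynomial (Fin n) ℂ) := by
      have := congrArg (Subtype.val) hxy
      exact this
    exact Subtype.ext (mul_left_cancel₀ (X_ne_zero _) h1)
  exact LinearMap.finrank_le_finrank_of_injective hinj

lemma finrank_Vcomp_mono' (hn : 0 < n) {a b : ℕ} (hab : a ≤ b) :
    finrank ℂ (Vcomp n a) ≤ finrank ℂ (Vcomp n b) := by
  induction b, hab using Nat.le_induction with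
  | base => exact le_refl _
  | succ b hab ih => exact le_trans ih (finrank_Vcomp_mono hn b)

lemma choose_le_finrank_V2 (hn : 0 < n) :
    (n + 1).choose 2 ≤ finrank ℂ (Vcomp n 2) := by
  haveI := fd_Vcomp (n := n) 2
  set g : Sym2 (Fin n) → (Fin n →₀ ℕ) := fun z =>
    Multiset.toFinsupp ((Sym2.equivSym (Fin n) z : Sym (Fin n) 2) : Multiset (Fin n)) with hg
  have hginj : Function.Injective g := by
    intro z1 z2 h
    exact (Sym2.equivSym (Fin n)).injective
      (Subtype.ext (Multiset.toFinsupp.injective h))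
  have hgmem : ∀ z, (monomial (g z) 1 : MvPolynomial (Fin n) ℂ) ∈ Vcomp n 2 := by
    intro z
    apply monomial_mem_Vcomp
    have h1 := Multiset.toFinsupp_sum_eq
        ((Sym2.equivSym (Fin n) z : Sym (Fin n) 2) : Multiset (Fin n))
    have h2 : Multiset.card ((Sym2.equivSym (Fin n) z : Sym (Fin n) 2) : Multiset (Fin n)) = 2 :=
      (Sym2.equivSym (Fin n) z).2
    rw [← Finsupp.sum_fintype (g z) (fun _ c => c) (fun j => rfl)]
    simp only [hg]
    exact h1.trans h2
  set fam : Sym2 (Fin n) → Vcomp n 2 := fun z => ⟨monomial (g z) 1, hgmem z⟩ with hfam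
  have hli0 : LinearIndependent ℂ (fun z : Sym2 (Fin n) =>
      (monomial (g z) 1 : MvPolynomial (Fin n) ℂ)) := by
    have h := (MvPolynomial.basisMonomials (Fin n) ℂ).linearIndependent.comp g hginj
    rwa [coe_basisMonomials] at h
  have hli : LinearIndependent ℂ fam := by
    apply LinearIndependent.of_comp (Vcomp n 2).subtype
    exact hli0
  have hcard := LinearIndependent.fintype_card_le_finrank hli
  rwa [Sym2.card, Fintype.card_fin] at hcard

/-! ### `Υ(I)` interactions -/

lemma Upsilon_pi {I : Ideal (MvPolynomial (Fin n) ℂ)} :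
    ∀ x ∈ Upsilon n d I, piL n d x ∈ Submodule.restrictScalars ℂ I := by
  have hmap : Submodule.map (piL n d) (Upsilon n d I) ≤ Submodule.restrictScalars ℂ I := by
    rw [Upsilon, Submodule.map_sup]
    apply sup_le
    · rintro y ⟨x, hx, rfl⟩
      rw [show piL n d x = 0 from IR_le_ker x hx]
      exact Submodule.zero_mem _
    · rw [Submodule.map_iSup]
      apply iSup_le
      intro w
      rintro y ⟨x, ⟨v, hv, rfl⟩, rfl⟩
      obtain ⟨hv1, hv2⟩ := Submodule.mem_inf.mp hv
      rw [piL_psi w hv2]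
      exact hv1
  intro x hx
  exact hmap ⟨x, hx, rfl⟩

lemma map_psi_le_Upsilon (I : Ideal (MvPolynomial (Fin n) ℂ)) (u : Fin d → ℕ) :
    Submodule.map (psi n d u) (restrictScalars ℂ I ⊓ Vcomp n (∑ i, u i))
      ≤ Upsilon n d I :=
  le_trans (le_iSup (fun w => Submodule.map (psi n d w)
    (restrictScalars ℂ I ⊓ Vcomp n (∑ i, w i))) u) le_sup_right

lemma IR_le_Upsilon (I : Ideal (MvPolynomial (Fin n) ℂ)) :
    Submodule.restrictScalars ℂ (IR n d) ≤ Upsilon n d I := le_sup_left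

/-- from the proof of Theorem 4.7: if `n ≤ r ≤ C(n+1,2)` and `I ⊆ V`
is a homogeneous ideal with Hilbert function `h_{r,Y}`, then `S/Υ(I)` has Hilbert
function `h_{r,X}`. -/
theorem stmt_9 (n d r : ℕ) (hn : 0 < n) (hd : 0 < d)
    (hnr : n ≤ r) (hr : r ≤ (n + 1).choose 2)
    (I : Ideal (MvPolynomial (Fin n) ℂ)) (hhom : IsHomogV n I)
    (hHF : ∀ a : ℕ, finrank ℂ (Vcomp n a ⧸
      Submodule.comap (Vcomp n a).subtype (restrictScalars ℂ I)) =
        min r (finrank ℂ (Vcomp n a))) :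
    ∀ u : Fin d → ℕ, finrank ℂ (Scomp n d u ⧸
      Submodule.comap (Scomp n d u).subtype (Upsilon n d I)) =
        min r (finrank ℂ (Scomp n d u)) := by
  intro u
  classical
  set N := ∑ i, u i with hN
  haveI hfdS : FiniteDimensional ℂ (Scomp n d u) := fd_Scomp u
  haveI hfdV : FiniteDimensional ℂ (Vcomp n N) := fd_Vcomp N
  set K : Submodule ℂ (Scomp n d u) := comap (Scomp n d u).subtype
    (restrictScalars ℂ (Upsilon n d I)) with hK
  set IVN : Submodule ℂ (Vcomp n N) := comap (Vcomp n N).subtype (restrictScalars ℂ I) with hIVN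
  -- the two canonical maps
  have hmemπ : ∀ x : Scomp n d u, piL n d ((Scomp n d u).subtype x) ∈ Vcomp n N :=
    fun x => piL_mem_Vcomp u x.2
  set θ0 : Scomp n d u →ₗ[ℂ] Vcomp n N :=
    LinearMap.codRestrict _ ((piL n d) ∘ₗ (Scomp n d u).subtype) hmemπ with hθ0
  set θ : Scomp n d u →ₗ[ℂ] (Vcomp n N ⧸ IVN) := IVN.mkQ ∘ₗ θ0 with hθ
  have hmemψ : ∀ v : Vcomp n N, psi n d u ((Vcomp n N).subtype v) ∈ Scomp n d u :=
    fun v => psi_mem_Scomp u v.2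
  set φ0 : Vcomp n N →ₗ[ℂ] Scomp n d u :=
    LinearMap.codRestrict _ ((psi n d u) ∘ₗ (Vcomp n N).subtype) hmemψ with hφ0
  set φ : Vcomp n N →ₗ[ℂ] (Scomp n d u ⧸ K) := K.mkQ ∘ₗ φ0 with hφ
  -- kernel inclusions
  have hKθ : K ≤ LinearMap.ker θ := by
    intro x hx
    have h1 : piL n d (x : MvPolynomial (Fin d × Fin n) ℂ) ∈ Submodule.restrictScalars ℂ I :=
      Upsilon_pi _ hx
    show IVN.mkQ (θ0 x) = 0
    rw [Submodule.mkQ_apply, Submodule.Quotient.mk_eq_zero]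
    exact h1
  have hIVφ : IVN ≤ LinearMap.ker φ := by
    intro v hv
    show K.mkQ (φ0 v) = 0
    rw [Submodule.mkQ_apply, Submodule.Quotient.mk_eq_zero]
    show psi n d u (v : MvPolynomial (Fin n) ℂ) ∈ Upsilon n d I
    exact map_psi_le_Upsilon I u ⟨(v : MvPolynomial (Fin n) ℂ),
      Submodule.mem_inf.mpr ⟨hv, v.2⟩, rfl⟩
  set θq := K.liftQ θ hKθ with hθq
  set φq := IVN.liftQ φ hIVφ with hφq
  -- surjectivity of both induced maps
  have hθsurj : Function.Surjective θq := by
    intro y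
    obtain ⟨v, rfl⟩ := IVN.mkQ_surjective y
    refine ⟨K.mkQ ⟨psi n d u (v : MvPolynomial (Fin n) ℂ), psi_mem_Scomp u v.2⟩, ?_⟩
    show θ _ = IVN.mkQ v
    show IVN.mkQ (θ0 _) = IVN.mkQ v
    congr 1
    apply Subtype.ext
    exact piL_psi u v.2
  have hφsurj : Function.Surjective φq := by
    intro y
    obtain ⟨x, rfl⟩ := K.mkQ_surjective y
    have hx := Scomp_le_straight u x.2
    rw [Submodule.mem_sup] at hx
    obtain ⟨a, ha, b, hb, hab⟩ := hx
    obtain ⟨v, hvV, hbv⟩ := hb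
    refine ⟨IVN.mkQ ⟨v, hvV⟩, ?_⟩
    show φ _ = K.mkQ x
    show K.mkQ (φ0 _) = K.mkQ x
    rw [Submodule.mkQ_apply, Submodule.mkQ_apply, Submodule.Quotient.eq]
    show (psi n d u v - (x : MvPolynomial (Fin d × Fin n) ℂ)) ∈ Upsilon n d I
    have : psi n d u v - (x : MvPolynomial (Fin d × Fin n) ℂ) = -a := by
      rw [← hab, hbv]; ring
    rw [this]
    exact Submodule.neg_mem _ (IR_le_Upsilon I ha)
  -- both quotients have the same dimension
  haveI : FiniteDimensional ℂ (Scomp n d u ⧸ K) := FiniteDimensional.finiteDimensional_quotient K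
  haveI : FiniteDimensional ℂ (Vcomp n N ⧸ IVN) := FiniteDimensional.finiteDimensional_quotient IVN
  have hdim1 : finrank ℂ (Vcomp n N ⧸ IVN) ≤ finrank ℂ (Scomp n d u ⧸ K) :=
    finrank_le_of_surj θq hθsurj
  have hdim2 : finrank ℂ (Scomp n d u ⧸ K) ≤ finrank ℂ (Vcomp n N ⧸ IVN) :=
    finrank_le_of_surj φq hφsurj
  have hdim : finrank ℂ (Scomp n d u ⧸ K) = min r (finrank ℂ (Vcomp n N)) := by
    rw [le_antisymm hdim2 hdim1]
    exact hHF N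
  -- compare `finrank (Vcomp n N)` with `finrank (Scomp n d u)`
  have hφ0inj : Function.Injective φ0 := by
    intro v w hvw
    apply Subtype.ext
    have h1 : psi n d u (v : MvPolynomial (Fin n) ℂ)
        = psi n d u (w : MvPolynomial (Fin n) ℂ) := congrArg Subtype.val hvw
    calc (v : MvPolynomial (Fin n) ℂ) = piL n d (psi n d u v) := (piL_psi u v.2).symm
      _ = piL n d (psi n d u w) := by rw [h1]
      _ = (w : MvPolynomial (Fin n) ℂ) := piL_psi u w.2
  have hVM : finrank ℂ (Vcomp n N) ≤ finrank ℂ (Scomp n d u) :=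
    LinearMap.finrank_le_finrank_of_injective hφ0inj
  have hmin : min r (finrank ℂ (Vcomp n N)) = min r (finrank ℂ (Scomp n d u)) := by
    rcases le_or_gt N 1 with hN1 | hN2
    · -- `ψ_u` is also surjective, so the dimensions agree
      have hφ0surj : Function.Surjective φ0 := by
        intro x
        obtain ⟨v, hvV, hbv⟩ := Scomp_le_psi_of_small u hN1 x.2
        exact ⟨⟨v, hvV⟩, Subtype.ext hbv⟩
      have hMV : finrank ℂ (Scomp n d u) ≤ finrank ℂ (Vcomp n N) :=
        finrank_le_of_surj φ0 hφ0surj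
      rw [le_antisymm hVM hMV]
    · -- `N ≥ 2`, so both dimensions are at least `r`
      have h2 : r ≤ finrank ℂ (Vcomp n N) := by
        calc r ≤ (n + 1).choose 2 := hr
          _ ≤ finrank ℂ (Vcomp n 2) := choose_le_finrank_V2 hn
          _ ≤ finrank ℂ (Vcomp n N) := finrank_Vcomp_mono' hn hN2
      have h3 : r ≤ finrank ℂ (Scomp n d u) := le_trans h2 hVM
      omega
  rw [← hmin]
  exact hdim


end BorderComon
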